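/- arXiv:gr-qc/0004045 — 3 statements merged into one kernel-verified Lean document; each statement's English description precedes it below -/
import Mathlib

section
/- Fix integers n ≥ 1 and N ≥ 1. Write A for the set of multi-indices α : {1,…,n} → {1,…,N} and M ⊆ A for the subset of nondecreasing multi-indices. For y : M → ℝ define its symmetric extension ŷ : A → ℝ by ŷ(α) = y(α↑), where α↑ denotes the nondecreasing rearrangement of α. Then for every J : A → ℝ one has the identity of real numbers [∫_{ℝ^M} exp(−(1/2)·Σ_{α∈A} ŷ(α)² + Σ_{α∈A} ŷ(α)·J(α)) dy] / [∫_{ℝ^M} exp(−(1/2)·Σ_{α∈A} ŷ(α)²) dy] = exp((1/2)·Σ_{α,β∈A} J(α)·G(α,β)·J(β)), where both integrals are with respect to Lebesgue measure on the finite-dimensional space ℝ^M, and G(α,β) = (1/n!)·Σ_{τ ∈ Sym({1,…,n})} ∏_{i=1}^{n} 𝟙[α(τ(i)) = β(i)] (𝟙 denoting the indicator taking value 1 when the equality holds and 0 otherwise). -/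
open MeasureTheory
open scoped Classical

noncomputable section

/-- The nondecreasing rearrangement of a multi-index `α : Fin n → Fin N`, as an
element of the set of nondecreasing multi-indices. -/
def sortedIdx {n N : ℕ} (α : Fin n → Fin N) : {α : Fin n → Fin N // Monotone α} :=
  ⟨α ∘ Tuple.sort α, Tuple.monotone_sort α⟩

/-- The symmetric extension of `y`, defined on nondecreasing multi-indices, to all
multi-indices: `ŷ(α) = y(α↑)`. -/
def symExt {n N : ℕ} (y : {α : Fin n → Fin N // Monotone α} → ℝ)
    (α : Fin n → Fin N) : ℝ :=
  y (sortedIdx α)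

/-- The fully symmetrized propagator
`G(α,β) = (1/n!) · Σ_{τ ∈ Sₙ} ∏ᵢ 𝟙[α(τ(i)) = β(i)]`. -/
def symProp {n N : ℕ} (α β : Fin n → Fin N) : ℝ :=
  (1 / (n.factorial : ℝ)) *
    ∑ τ : Equiv.Perm (Fin n), ∏ i : Fin n, if α (τ i) = β i then (1 : ℝ) else 0

section Aux
variable {n N : ℕ}

lemma sortedIdx_of_monotone (m : {α : Fin n → Fin N // Monotone α}) :
    sortedIdx m.val = m := by
  apply Subtype.ext
  show m.val ∘ Tuple.sort m.val = m.val
  have h := (Tuple.comp_sort_eq_comp_iff_monotone (f := m.val) (σ := Equiv.refl _)).mpr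
  simpa using (h (by simpa using m.2)).symm

lemma sortedIdx_comp_perm (α : Fin n → Fin N) (τ : Equiv.Perm (Fin n)) :
    sortedIdx (α ∘ τ) = sortedIdx α :=
  Subtype.ext (Tuple.comp_perm_comp_sort_eq_comp_sort)

lemma sortedIdx_eq_iff (α β : Fin n → Fin N) :
    sortedIdx α = sortedIdx β ↔ ∃ τ : Equiv.Perm (Fin n), α ∘ τ = β := by
  constructor
  · intro h
    have h' : α ∘ Tuple.sort α = β ∘ Tuple.sort β := congrArg Subtype.val h
    refine ⟨(Tuple.sort β).symm.trans (Tuple.sort α), funext fun i => ?_⟩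
    have := congrFun h' ((Tuple.sort β).symm i)
    simpa using this
  · rintro ⟨τ, rfl⟩
    exact (sortedIdx_comp_perm α τ).symm

/-- Number of multi-indices with a given nondecreasing rearrangement. -/
def fiberCard (m : {α : Fin n → Fin N // Monotone α}) : ℕ :=
  (Finset.univ.filter fun α : Fin n → Fin N => sortedIdx α = m).card

/-- Size of the stabilizer of a multi-index under permutations of positions. -/
def stabCard (α : Fin n → Fin N) : ℕ :=
  (Finset.univ.filter fun τ : Equiv.Perm (Fin n) => α ∘ τ = α).card

lemma stabCard_pos (α : Fin n → Fin N) : 0 < stabCard α := by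
  refine Finset.card_pos.mpr ⟨1, Finset.mem_filter.mpr ⟨Finset.mem_univ _, ?_⟩⟩
  funext i; simp

lemma fiberCard_pos (m : {α : Fin n → Fin N // Monotone α}) : 0 < fiberCard m :=
  Finset.card_pos.mpr ⟨m.val, Finset.mem_filter.mpr ⟨Finset.mem_univ _, sortedIdx_of_monotone m⟩⟩

lemma card_trans (α β : Fin n → Fin N) :
    (Finset.univ.filter fun τ : Equiv.Perm (Fin n) => α ∘ τ = β).card =
      if sortedIdx α = sortedIdx β then stabCard α else 0 := by
  split_ifs with h
  · obtain ⟨τ₀, hτ₀⟩ := (sortedIdx_eq_iff α β).mp h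
    refine (Finset.card_nbij (fun σ => σ * τ₀) ?_ ?_ ?_).symm
    · intro σ hσ
      simp only [Finset.mem_coe, Finset.mem_filter, Finset.mem_univ, true_and] at hσ ⊢
      funext i
      have h1 : α (σ (τ₀ i)) = α (τ₀ i) := congrFun hσ (τ₀ i)
      have h2 : α (τ₀ i) = β i := congrFun hτ₀ i
      simpa [Equiv.Perm.mul_apply] using h1.trans h2
    · intro a _ b _ hab
      exact mul_right_cancel hab
    · intro τ hτ
      simp only [Finset.mem_coe, Finset.mem_filter, Finset.mem_univ, true_and] at hτ
      refine ⟨τ * τ₀⁻¹, Finset.mem_filter.mpr ⟨Finset.mem_univ _, ?_⟩, by simp⟩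
      funext i
      have h1 : α (τ (τ₀⁻¹ i)) = β (τ₀⁻¹ i) := congrFun hτ (τ₀⁻¹ i)
      have h2 : α (τ₀ (τ₀⁻¹ i)) = β (τ₀⁻¹ i) := congrFun hτ₀ (τ₀⁻¹ i)
      simp only [Function.comp, Equiv.Perm.mul_apply]
      rw [h1, ← h2]; simp
  · rw [Finset.card_eq_zero, Finset.filter_eq_empty_iff]
    intro τ _ hτ
    exact h ((sortedIdx_eq_iff α β).mpr ⟨τ, hτ⟩)

lemma stab_mul_fiber (α : Fin n → Fin N) :
    stabCard α * fiberCard (sortedIdx α) = n.factorial := by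
  have key := Finset.card_eq_sum_card_fiberwise
    (f := fun τ : Equiv.Perm (Fin n) => α ∘ τ)
    (s := Finset.univ)
    (t := Finset.univ.filter fun β : Fin n → Fin N => sortedIdx β = sortedIdx α)
    (fun τ _ => Finset.mem_filter.mpr ⟨Finset.mem_univ _, sortedIdx_comp_perm α τ⟩)
  rw [Finset.card_univ, Fintype.card_perm, Fintype.card_fin] at key
  have h : ∀ β ∈ Finset.univ.filter fun β : Fin n → Fin N => sortedIdx β = sortedIdx α,
      (Finset.univ.filter fun τ : Equiv.Perm (Fin n) => α ∘ τ = β).card = stabCard α := by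
    intro β hβ
    rw [card_trans, if_pos ((Finset.mem_filter.mp hβ).2).symm]
  rw [Finset.sum_congr rfl h, Finset.sum_const, smul_eq_mul] at key
  have hc : (Finset.univ.filter fun β : Fin n → Fin N => sortedIdx β = sortedIdx α).card
      = fiberCard (sortedIdx α) := rfl
  rw [hc] at key
  rw [mul_comm, ← key]

lemma symProp_eq (α β : Fin n → Fin N) :
    symProp α β = if sortedIdx α = sortedIdx β
      then 1 / (fiberCard (sortedIdx α) : ℝ) else 0 := by
  have h1 : ∀ τ : Equiv.Perm (Fin n),
      (∏ i : Fin n, if α (τ i) = β i then (1 : ℝ) else 0)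
        = if α ∘ τ = β then (1 : ℝ) else 0 := by
    intro τ
    rw [Fintype.prod_boole]
    congr 1
    simp [funext_iff, Function.comp]
  rw [symProp]
  simp_rw [h1]
  rw [Finset.sum_boole]
  have h2 : ((Finset.univ.filter fun τ : Equiv.Perm (Fin n) => α ∘ τ = β).card : ℝ)
      = if sortedIdx α = sortedIdx β then (stabCard α : ℝ) else 0 := by
    rw [card_trans]; split_ifs <;> simp
  rw [h2]
  split_ifs with h
  · have hkey : (stabCard α : ℝ) * (fiberCard (sortedIdx α) : ℝ) = (n.factorial : ℝ) := by
      rw [← Nat.cast_mul, stab_mul_fiber]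
    have hs : (0:ℝ) < stabCard α := by exact_mod_cast stabCard_pos α
    have hf : (0:ℝ) < fiberCard (sortedIdx α) := by exact_mod_cast fiberCard_pos _
    rw [← hkey]
    field_simp
  · simp

lemma gauss_pos {c : ℝ} (hc : 0 < c) : 0 < ∫ y : ℝ, Real.exp (-(c/2) * y^2) := by
  rw [integral_gaussian]
  exact Real.sqrt_pos.mpr (div_pos Real.pi_pos (by linarith))

lemma gauss_lin {c : ℝ} (hc : 0 < c) (K : ℝ) :
    ∫ y : ℝ, Real.exp (-(c/2) * y^2 + y * K)
      = Real.exp (K^2 / (2*c)) * ∫ y : ℝ, Real.exp (-(c/2) * y^2) := by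
  have hc' : c ≠ 0 := ne_of_gt hc
  have hrw : ∀ y : ℝ, -(c/2) * y^2 + y * K
      = -(c/2) * (y - K/c)^2 + K^2/(2*c) := by
    intro y; field_simp; ring
  simp_rw [hrw, Real.exp_add]
  rw [integral_mul_const, integral_sub_right_eq_self (fun y => Real.exp (-(c/2) * y^2)) (K/c),
    mul_comm]

end Aux

/-- Real case of Proposition 1 (GM:rel): the free partition function of the rank-`n`
generalized matrix model with real fully symmetric tensor field, in presence of a
source `J`, equals `exp((1/2)·J G J)` with the fully symmetrized propagator `G`. -/
theorem real_free_partition_function (n N : ℕ) (hn : 1 ≤ n) (hN : 1 ≤ N)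
    (J : (Fin n → Fin N) → ℝ) :
    (∫ y : {α : Fin n → Fin N // Monotone α} → ℝ,
        Real.exp (-(1/2) * ∑ α : Fin n → Fin N, (symExt y α) ^ 2
          + ∑ α : Fin n → Fin N, symExt y α * J α)) /
    (∫ y : {α : Fin n → Fin N // Monotone α} → ℝ,
        Real.exp (-(1/2) * ∑ α : Fin n → Fin N, (symExt y α) ^ 2)) =
    Real.exp ((1/2) * ∑ α : Fin n → Fin N, ∑ β : Fin n → Fin N,
        J α * symProp α β * J β) := by
  set M := {α : Fin n → Fin N // Monotone α}
  set c : M → ℝ := fun m => (fiberCard m : ℝ) with hc_def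
  set K : M → ℝ := fun m =>
    ∑ α ∈ Finset.univ.filter fun α : Fin n → Fin N => sortedIdx α = m, J α with hK_def
  have hc : ∀ m : M, 0 < c m := by
    intro m
    simp only [hc_def]
    exact_mod_cast fiberCard_pos m
  -- rewrite the quadratic sum
  have hsum1 : ∀ y : M → ℝ, ∑ α : Fin n → Fin N, (symExt y α)^2
      = ∑ m : M, c m * (y m)^2 := by
    intro y
    simp only [symExt]
    rw [← Finset.sum_fiberwise' Finset.univ sortedIdx (fun m => (y m)^2)]
    refine Finset.sum_congr rfl fun m _ => ?_
    rw [Finset.sum_const, nsmul_eq_mul]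
    rfl
  -- rewrite the linear sum
  have hsum2 : ∀ y : M → ℝ, ∑ α : Fin n → Fin N, symExt y α * J α
      = ∑ m : M, y m * K m := by
    intro y
    rw [← Finset.sum_fiberwise Finset.univ sortedIdx (fun α => symExt y α * J α)]
    refine Finset.sum_congr rfl fun m _ => ?_
    rw [hK_def, Finset.mul_sum]
    refine Finset.sum_congr rfl fun α hα => ?_
    have h := (Finset.mem_filter.mp hα).2
    rw [symExt, h]
  -- numerator as a product of one-dimensional integrals
  have hnum : (∫ y : M → ℝ,
        Real.exp (-(1/2) * ∑ α : Fin n → Fin N, (symExt y α) ^ 2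
          + ∑ α : Fin n → Fin N, symExt y α * J α))
      = ∏ m : M, ∫ t : ℝ, Real.exp (-(c m/2) * t^2 + t * K m) := by
    rw [← integral_fintype_prod_eq_prod (ι := M)
      (f := fun m (t : ℝ) => Real.exp (-(c m/2) * t^2 + t * K m))]
    refine integral_congr_ae (Filter.Eventually.of_forall fun y => ?_)
    dsimp only
    rw [hsum1 y, hsum2 y, ← Real.exp_sum, Finset.mul_sum, ← Finset.sum_add_distrib]
    congr 1
    refine Finset.sum_congr rfl fun m _ => ?_
    ring
  -- denominator as a product of one-dimensional integrals
  have hden : (∫ y : M → ℝ,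
        Real.exp (-(1/2) * ∑ α : Fin n → Fin N, (symExt y α) ^ 2))
      = ∏ m : M, ∫ t : ℝ, Real.exp (-(c m/2) * t^2) := by
    rw [← integral_fintype_prod_eq_prod (ι := M)
      (f := fun m (t : ℝ) => Real.exp (-(c m/2) * t^2))]
    refine integral_congr_ae (Filter.Eventually.of_forall fun y => ?_)
    dsimp only
    rw [hsum1 y, ← Real.exp_sum, Finset.mul_sum]
    congr 1
    refine Finset.sum_congr rfl fun m _ => ?_
    ring
  -- the ratio
  have hpos : 0 < ∏ m : M, ∫ t : ℝ, Real.exp (-(c m/2) * t^2) :=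
    Finset.prod_pos fun m _ => gauss_pos (hc m)
  have hratio : (∫ y : M → ℝ,
        Real.exp (-(1/2) * ∑ α : Fin n → Fin N, (symExt y α) ^ 2
          + ∑ α : Fin n → Fin N, symExt y α * J α)) /
      (∫ y : M → ℝ,
        Real.exp (-(1/2) * ∑ α : Fin n → Fin N, (symExt y α) ^ 2))
      = Real.exp (∑ m : M, (K m)^2 / (2 * c m)) := by
    rw [hnum, hden,
      Finset.prod_congr rfl (fun m _ => gauss_lin (hc m) (K m)),
      Finset.prod_mul_distrib, ← Real.exp_sum, mul_div_assoc, div_self hpos.ne', mul_one]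
  rw [hratio]
  -- identify the exponents
  congr 1
  have hsym : ∀ α β : Fin n → Fin N, J α * symProp α β * J β
      = if sortedIdx β = sortedIdx α then J α * J β / c (sortedIdx α) else 0 := by
    intro α β
    rw [symProp_eq]
    by_cases h : sortedIdx α = sortedIdx β
    · rw [if_pos h, if_pos h.symm]
      field_simp
      rfl
    · rw [if_neg h, if_neg (fun h' => h h'.symm), mul_zero, zero_mul]
  have hinner : ∀ α : Fin n → Fin N,
      ∑ β : Fin n → Fin N, J α * symProp α β * J β
        = J α * K (sortedIdx α) / c (sortedIdx α) := by
    intro α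
    simp_rw [hsym α]
    rw [← Finset.sum_filter, hK_def, Finset.mul_sum, Finset.sum_div]
  simp_rw [hinner]
  have houter : ∀ m : M,
      (∑ α ∈ Finset.univ.filter fun α : Fin n → Fin N => sortedIdx α = m,
        J α * K (sortedIdx α) / c (sortedIdx α)) = (K m)^2 / c m := by
    intro m
    have : ∀ α ∈ Finset.univ.filter fun α : Fin n → Fin N => sortedIdx α = m,
        J α * K (sortedIdx α) / c (sortedIdx α) = J α * (K m / c m) := by
      intro α hα
      rw [(Finset.mem_filter.mp hα).2, mul_div_assoc]
    rw [Finset.sum_congr rfl this, ← Finset.sum_mul]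
    have hKm : (∑ α ∈ Finset.univ.filter fun α : Fin n → Fin N => sortedIdx α = m, J α)
        = K m := rfl
    rw [hKm, sq]
    ring
  have htot : ∑ α : Fin n → Fin N, J α * K (sortedIdx α) / c (sortedIdx α)
      = ∑ m : M, (K m)^2 / c m := by
    rw [← Finset.sum_fiberwise Finset.univ sortedIdx
      (fun α => J α * K (sortedIdx α) / c (sortedIdx α))]
    exact Finset.sum_congr rfl fun m _ => houter m
  rw [htot, Finset.mul_sum]
  refine Finset.sum_congr rfl fun m _ => ?_
  ring
end
end

section
/- Let n = 3. A glueing datum of dimension n consists of: a finite nonempty index set I (indexing copies Δ_i of the standard n-simplex, realized as {x : {0,…,n} → [0,∞) | Σ_v x_v = 1}, with vertices labeled 0,…,n); a fixed-point-free involution P of the set I × {0,…,n} of codimension-1 faces, where (i,k) denotes the face {x ∈ Δ_i | x_k = 0}; and, for each face (i,k) with P(i,k) = (j,l), a bijection φ_{(i,k)} : {0,…,n}∖{k} → {0,…,n}∖{l}, subject to φ_{(j,l)} = φ_{(i,k)}⁻¹. Suppose condition Ori holds: there exists ε : I → {+1,−1} such that for every face (i,k) with P(i,k) = (j,l) one has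 ε(i)·(−1)^k·sgn(φ_{(i,k)}) = −ε(j)·(−1)^l, where sgn(φ_{(i,k)}) is the signature of the permutation of {1,…,n} obtained by conjugating φ_{(i,k)} with the order-preserving bijections {0,…,n}∖{k} → {1,…,n} and {0,…,n}∖{l} → {1,…,n}. Then condition Dir holds: there exist relations o_i on {0,…,n} (one for each i ∈ I) such that for all a ≠ b exactly one of o_i(a,b), o_i(b,a) holds, and for every face (i,k) with P(i,k) = (j,l) and all a, b ∈ {0,…,n}∖{k} with a ≠ b one has o_i(a,b) ↔ o_j(φ_{(i,k)}(a), φ_{(i,k)}(b)). -/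
open scoped Classical

noncomputable section

/-- A glueing datum of dimension `n`: a finite nonempty set `I` indexing copies of the
standard `n`-simplex, a fixed-point-free involution `P` of the set `I × Fin (n+1)` of
codimension-1 faces (the face `(i,k)` of the `i`-th simplex being opposite to the vertex
`k`), and for each face `(i,k)` with `P (i,k) = (j,l)` a simplicial identification,
encoded as a permutation `glue (i,k)` of the vertex labels sending `k` to `l` (its
restriction to `{0,…,n} \ {k}` is the bijection `φ_{(i,k)}` onto `{0,…,n} \ {l}`),
subject to `φ_{P f} = (φ f)⁻¹`. -/
structure GlueingDatum (n : ℕ) where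
  I : Type
  fintypeI : Fintype I
  nonemptyI : Nonempty I
  P : I × Fin (n + 1) → I × Fin (n + 1)
  P_involutive : ∀ f, P (P f) = f
  P_fixedPointFree : ∀ f, P f ≠ f
  glue : I × Fin (n + 1) → Equiv.Perm (Fin (n + 1))
  glue_face : ∀ f, glue f f.2 = (P f).2
  glue_symm : ∀ f, glue (P f) = (glue f).symm

/-- The permutation of `Fin n` obtained from a permutation `e` of `Fin (n+1)` by
deleting `k` from the source and `e k` from the target, conjugating by the
order-preserving bijections `{0,…,n} \ {k} ≃ {1,…,n}` and `{0,…,n} \ {e k} ≃ {1,…,n}`. -/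
def restrictPerm {n : ℕ} (e : Equiv.Perm (Fin (n + 1))) (k : Fin (n + 1)) :
    Equiv.Perm (Fin n) :=
  (finSuccAboveEquiv k).trans
    ((e.subtypeEquiv (fun _ => (not_congr e.apply_eq_iff_eq).symm)).trans
      (finSuccAboveEquiv (e k)).symm)

/-- The signature of the face-pairing `e` at the face opposite to `k`. -/
def glueSign {n : ℕ} (e : Equiv.Perm (Fin (n + 1))) (k : Fin (n + 1)) : ℤˣ :=
  Equiv.Perm.sign (restrictPerm e k)

/-- Condition Ori: the simplices can be given signs so that every face-pairing
reverses the induced orientation. -/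
def Ori {n : ℕ} (D : GlueingDatum n) : Prop :=
  ∃ ε : D.I → ℤˣ, ∀ (i : D.I) (k : Fin (n + 1)),
    ε i * (-1) ^ (k : ℕ) * glueSign (D.glue (i, k)) k
      = -(ε (D.P (i, k)).1 * (-1) ^ (((D.P (i, k)).2 : Fin (n + 1)) : ℕ))

/-- Condition Dir: the edges of the simplices can be directed compatibly with all the
face-pairings. -/
def Dir {n : ℕ} (D : GlueingDatum n) : Prop :=
  ∃ o : D.I → Fin (n + 1) → Fin (n + 1) → Prop,
    (∀ i a b, a ≠ b → Xor' (o i a b) (o i b a)) ∧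
    (∀ (i : D.I) (k a b : Fin (n + 1)), a ≠ k → b ≠ k → a ≠ b →
      (o i a b ↔ o (D.P (i, k)).1 (D.glue (i, k) a) (D.glue (i, k) b)))

namespace OriDirAux

/-! ### Combinatorics of `Fin 4` -/

/-- The vertex of the tetrahedron other than `a`, `b`, `k` (when those are distinct). -/
def rem (a b k : Fin 4) : Fin 4 := 2 - a - b - k

def dsg (x y : Fin 4) : ℤ := if x < y then 1 else -1

/-- Sign of the tuple `(a,b,c,k)` as a permutation of `(0,1,2,3)`. -/
def sg (a b c k : Fin 4) : ℤ := dsg a b * dsg a c * dsg a k * dsg b c * dsg b k * dsg c k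

def sgp (φ : Equiv.Perm (Fin 4)) : ℤ := sg (φ 0) (φ 1) (φ 2) (φ 3)

def pick (a b : Fin 4) : Fin 4 :=
  if 0 ≠ a ∧ 0 ≠ b then 0 else if 1 ≠ a ∧ 1 ≠ b then 1 else 2

lemma rem_comm : ∀ a b k : Fin 4, rem a b k = rem b a k := by decide

lemma rem_rem : ∀ a b k : Fin 4, a ≠ b → a ≠ k → b ≠ k → rem a b (rem a b k) = k := by decide

lemma rem_ne : ∀ a b k : Fin 4, a ≠ b → a ≠ k → b ≠ k →
    (rem a b k ≠ a ∧ rem a b k ≠ b ∧ rem a b k ≠ k) := by decide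

lemma other_face : ∀ a b k k' : Fin 4, a ≠ b → a ≠ k → b ≠ k → a ≠ k' → b ≠ k' →
    (k' = k ∨ k' = rem a b k) := by decide

lemma pick_ne : ∀ a b : Fin 4, a ≠ b → (a ≠ pick a b ∧ b ≠ pick a b) := by decide

lemma sg_R : ∀ a b k : Fin 4, a ≠ b → a ≠ k → b ≠ k →
    sg b a (rem b a k) k = -sg a b (rem a b k) k := by decide

lemma sg_i : ∀ a b k : Fin 4, a ≠ b → a ≠ k → b ≠ k →
    sg a b (rem a b (rem a b k)) (rem a b k) = -sg a b (rem a b k) k := by decide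

lemma sg_pm : ∀ a b c k : Fin 4, sg a b c k = 1 ∨ sg a b c k = -1 := by decide

set_option maxHeartbeats 4000000 in
lemma sg_comp : ∀ φ : Equiv.Perm (Fin 4), ∀ a b k : Fin 4, a ≠ b → a ≠ k → b ≠ k →
    sg (φ a) (φ b) (φ (rem a b k)) (φ k) = sgp φ * sg a b (rem a b k) k := by decide

set_option maxHeartbeats 4000000 in
lemma rem_phi : ∀ φ : Equiv.Perm (Fin 4), ∀ a b k : Fin 4, a ≠ b → a ≠ k → b ≠ k →
    rem (φ a) (φ b) (φ k) = φ (rem a b k) := by decide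

set_option maxHeartbeats 4000000 in
lemma sign_id : ∀ φ : Equiv.Perm (Fin 4), ∀ k : Fin 4,
    sgp φ = (-1 : ℤ) ^ ((k : ℕ) + ((φ k : Fin 4) : ℕ)) * ((glueSign φ k : ℤˣ) : ℤ) := by
  decide

/-! ### States -/

variable (D : GlueingDatum 3)

abbrev Stt := D.I × Fin 4 × Fin 4 × Fin 4

def Good (x : Stt D) : Prop :=
  x.2.1 ≠ x.2.2.1 ∧ x.2.1 ≠ x.2.2.2 ∧ x.2.2.1 ≠ x.2.2.2

abbrev GS := {x : Stt D // Good D x}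

def Afun (x : Stt D) : Stt D :=
  ((D.P (x.1, x.2.2.2)).1, D.glue (x.1, x.2.2.2) x.2.1, D.glue (x.1, x.2.2.2) x.2.2.1,
    (D.P (x.1, x.2.2.2)).2)

def ifun (x : Stt D) : Stt D := (x.1, x.2.1, x.2.2.1, rem x.2.1 x.2.2.1 x.2.2.2)

def Rfun (x : Stt D) : Stt D := (x.1, x.2.2.1, x.2.1, x.2.2.2)

lemma P_pair (f : D.I × Fin 4) : ((D.P f).1, (D.P f).2) = D.P f := rfl

lemma Afun_invol (x : Stt D) : Afun D (Afun D x) = x := by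
  obtain ⟨i, a, b, k⟩ := x
  unfold Afun
  simp only [P_pair, D.P_involutive, D.glue_symm, Equiv.symm_apply_apply]

lemma good_A {x : Stt D} (h : Good D x) : Good D (Afun D x) := by
  obtain ⟨i, a, b, k⟩ := x
  obtain ⟨h1, h2, h3⟩ := h
  refine ⟨(D.glue (i, k)).injective.ne h1, ?_, ?_⟩ <;>
    · show _ ≠ (D.P (i, k)).2
      rw [← D.glue_face (i, k)]
      exact (D.glue (i, k)).injective.ne (by assumption)

lemma good_i {x : Stt D} (h : Good D x) : Good D (ifun D x) := by
  obtain ⟨i, a, b, k⟩ := x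
  obtain ⟨h1, h2, h3⟩ := h
  have := rem_ne a b k h1 h2 h3
  exact ⟨h1, (this.1).symm, (this.2.1).symm⟩

lemma ifun_invol {x : Stt D} (h : Good D x) : ifun D (ifun D x) = x := by
  obtain ⟨i, a, b, k⟩ := x
  obtain ⟨h1, h2, h3⟩ := h
  unfold ifun
  simp only [rem_rem a b k h1 h2 h3]

lemma good_R {x : Stt D} (h : Good D x) : Good D (Rfun D x) :=
  ⟨h.1.symm, h.2.2, h.2.1⟩

/-! ### The three permutations of the state set -/

def Aperm : Equiv.Perm (GS D) where
  toFun x := ⟨Afun D x.1, good_A D x.2⟩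
  invFun x := ⟨Afun D x.1, good_A D x.2⟩
  left_inv x := Subtype.ext (Afun_invol D x.1)
  right_inv x := Subtype.ext (Afun_invol D x.1)

def iperm : Equiv.Perm (GS D) where
  toFun x := ⟨ifun D x.1, good_i D x.2⟩
  invFun x := ⟨ifun D x.1, good_i D x.2⟩
  left_inv x := Subtype.ext (ifun_invol D x.2)
  right_inv x := Subtype.ext (ifun_invol D x.2)

def Rperm : Equiv.Perm (GS D) where
  toFun x := ⟨Rfun D x.1, good_R D x.2⟩
  invFun x := ⟨Rfun D x.1, good_R D x.2⟩
  left_inv x := Subtype.ext rfl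
  right_inv x := Subtype.ext rfl

@[simp] lemma Aperm_val (x : GS D) : (Aperm D x).1 = Afun D x.1 := rfl
@[simp] lemma iperm_val (x : GS D) : (iperm D x).1 = ifun D x.1 := rfl
@[simp] lemma Rperm_val (x : GS D) : (Rperm D x).1 = Rfun D x.1 := rfl

lemma Aperm_sq : Aperm D * Aperm D = 1 :=
  Equiv.ext fun x => Subtype.ext (Afun_invol D x.1)

lemma iperm_sq : iperm D * iperm D = 1 :=
  Equiv.ext fun x => Subtype.ext (ifun_invol D x.2)

lemma Rperm_sq : Rperm D * Rperm D = 1 :=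
  Equiv.ext fun x => Subtype.ext rfl

lemma Aperm_inv : (Aperm D)⁻¹ = Aperm D := inv_eq_of_mul_eq_one_right (Aperm_sq D)
lemma iperm_inv : (iperm D)⁻¹ = iperm D := inv_eq_of_mul_eq_one_right (iperm_sq D)
lemma Rperm_inv : (Rperm D)⁻¹ = Rperm D := inv_eq_of_mul_eq_one_right (Rperm_sq D)

def tp : Equiv.Perm (GS D) := Aperm D * iperm D

lemma tp_inv : (tp D)⁻¹ = iperm D * Aperm D := by
  rw [tp, mul_inv_rev, Aperm_inv, iperm_inv]

lemma commute_RA : Commute (Rperm D) (Aperm D) := by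
  apply Equiv.ext
  intro x
  simp only [Equiv.Perm.mul_apply]
  apply Subtype.ext
  rfl

lemma commute_Ri : Commute (Rperm D) (iperm D) := by
  apply Equiv.ext
  intro x
  simp only [Equiv.Perm.mul_apply]
  apply Subtype.ext
  obtain ⟨⟨i, a, b, k⟩, hx⟩ := x
  show Rfun D (ifun D _) = ifun D (Rfun D _)
  unfold Rfun ifun
  simp only [rem_comm a b k]

lemma commute_Rt : Commute (Rperm D) (tp D) := (commute_RA D).mul_right (commute_Ri D)

lemma semiconj_i : SemiconjBy (iperm D) (tp D) (tp D)⁻¹ := by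
  show iperm D * tp D = (tp D)⁻¹ * iperm D
  rw [tp_inv, tp, mul_assoc]

def Jp : Equiv.Perm (GS D) := Rperm D * iperm D

lemma semiconj_J : SemiconjBy (Jp D) (tp D) (tp D)⁻¹ := by
  show Jp D * tp D = (tp D)⁻¹ * Jp D
  have h1 : iperm D * tp D = (tp D)⁻¹ * iperm D := semiconj_i D
  have h2 : Rperm D * (tp D)⁻¹ = (tp D)⁻¹ * Rperm D := ((commute_Rt D).inv_right).eq
  calc Jp D * tp D = Rperm D * (iperm D * tp D) := by rw [Jp, mul_assoc]
    _ = Rperm D * ((tp D)⁻¹ * iperm D) := by rw [h1]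
    _ = Rperm D * (tp D)⁻¹ * iperm D := by rw [mul_assoc]
    _ = (tp D)⁻¹ * Rperm D * iperm D := by rw [h2]
    _ = (tp D)⁻¹ * Jp D := by rw [Jp, mul_assoc]

lemma Jp_no_fixed (x : GS D) : Jp D x ≠ x := by
  intro h
  have := congrArg (fun y : GS D => y.1.2.1) h
  obtain ⟨⟨i, a, b, k⟩, hx⟩ := x
  exact hx.1 (this.symm)

/-! ### The sign invariant -/

section Sign

variable (ε : D.I → ℤˣ)

def sig (x : GS D) : ℤ :=
  (ε x.1.1 : ℤ) * sg x.1.2.1 x.1.2.2.1 (rem x.1.2.1 x.1.2.2.1 x.1.2.2.2) x.1.2.2.2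

lemma sig_ne_zero (x : GS D) : sig D ε x ≠ 0 := by
  have h := sg_pm x.1.2.1 x.1.2.2.1 (rem x.1.2.1 x.1.2.2.1 x.1.2.2.2) x.1.2.2.2
  have h2 : (ε x.1.1 : ℤ) ≠ 0 := Units.ne_zero _
  rcases h with h | h <;> rw [sig, h] <;> simpa using h2

variable (hε : ∀ (i : D.I) (k : Fin 4),
    ε i * (-1) ^ (k : ℕ) * glueSign (D.glue (i, k)) k
      = -(ε (D.P (i, k)).1 * (-1) ^ (((D.P (i, k)).2 : Fin 4) : ℕ)))

include hε

lemma eps_step (i : D.I) (k : Fin 4) :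
    (ε (D.P (i, k)).1 : ℤ) * sgp (D.glue (i, k)) = -(ε i : ℤ) := by
  have h := congrArg (fun u : ℤˣ => (u : ℤ)) (hε i k)
  simp only [Units.val_mul, Units.val_neg, Units.val_pow_eq_pow_val] at h
  have hl : ((D.P (i, k)).2 : Fin 4) = D.glue (i, k) k := (D.glue_face (i, k)).symm
  rw [hl] at h
  rw [sign_id (D.glue (i, k)) k, pow_add]
  rcases Int.units_eq_one_or (ε i) with e1 | e1 <;>
    rcases Int.units_eq_one_or (ε (D.P (i, k)).1) with e2 | e2 <;>
      rcases Int.units_eq_one_or (glueSign (D.glue (i, k)) k) with e3 | e3 <;>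
        rcases Nat.even_or_odd (k : ℕ) with p1 | p1 <;>
          rcases Nat.even_or_odd ((D.glue (i, k) k : Fin 4) : ℕ) with p2 | p2 <;>
            simp only [e1, e2, e3, p1.neg_one_pow, p2.neg_one_pow, Units.val_one,
              Units.val_neg] at h ⊢ <;> linarith

lemma sig_A (x : GS D) : sig D ε (Aperm D x) = -sig D ε x := by
  obtain ⟨⟨i, a, b, k⟩, h1, h2, h3⟩ := x
  have hc := rem_ne a b k h1 h2 h3
  set φ := D.glue (i, k) with hφ
  have hval : (Aperm D ⟨(i, a, b, k), h1, h2, h3⟩).1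
      = ((D.P (i, k)).1, φ a, φ b, (D.P (i, k)).2) := rfl
  have hl : ((D.P (i, k)).2 : Fin 4) = φ k := (D.glue_face (i, k)).symm
  have hrem : rem (φ a) (φ b) (φ k) = φ (rem a b k) := rem_phi φ a b k h1 h2 h3
  calc sig D ε (Aperm D ⟨(i, a, b, k), h1, h2, h3⟩)
      = (ε (D.P (i, k)).1 : ℤ) * sg (φ a) (φ b) (rem (φ a) (φ b) (φ k)) (φ k) := by
        rw [sig, hval]; rw [hl]
    _ = (ε (D.P (i, k)).1 : ℤ) * (sgp φ * sg a b (rem a b k) k) := by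
        rw [hrem, sg_comp φ a b k h1 h2 h3]
    _ = ((ε (D.P (i, k)).1 : ℤ) * sgp φ) * sg a b (rem a b k) k := by ring
    _ = (-(ε i : ℤ)) * sg a b (rem a b k) k := by rw [eps_step D ε hε i k]
    _ = -sig D ε ⟨(i, a, b, k), h1, h2, h3⟩ := by rw [sig]; ring

omit hε in
lemma sig_i (x : GS D) : sig D ε (iperm D x) = -sig D ε x := by
  obtain ⟨⟨i, a, b, k⟩, h1, h2, h3⟩ := x
  show (ε i : ℤ) * sg a b (rem a b (rem a b k)) (rem a b k) = -((ε i : ℤ) * sg a b (rem a b k) k)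
  rw [sg_i a b k h1 h2 h3]; ring

omit hε in
lemma sig_R (x : GS D) : sig D ε (Rperm D x) = -sig D ε x := by
  obtain ⟨⟨i, a, b, k⟩, h1, h2, h3⟩ := x
  show (ε i : ℤ) * sg b a (rem b a k) k = -((ε i : ℤ) * sg a b (rem a b k) k)
  rw [sg_R a b k h1 h2 h3]; ring

lemma sig_t (x : GS D) : sig D ε (tp D x) = sig D ε x := by
  have : tp D x = Aperm D (iperm D x) := rfl
  rw [this, sig_A D ε hε, sig_i D ε]; ring

lemma sig_tinv (x : GS D) : sig D ε ((tp D)⁻¹ x) = sig D ε x := by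
  have h := sig_t D ε hε ((tp D)⁻¹ x)
  rw [← Equiv.Perm.mul_apply, mul_inv_cancel, Equiv.Perm.one_apply] at h
  exact h.symm

lemma sig_tpow : ∀ (n : ℤ) (x : GS D), sig D ε ((tp D ^ n) x) = sig D ε x := by
  intro n
  induction n using Int.induction_on with
  | zero => intro x; simp
  | succ m ih =>
      intro x
      have e : (tp D ^ ((m : ℤ) + 1)) x = tp D ((tp D ^ (m : ℤ)) x) := by
        rw [show ((m : ℤ) + 1) = 1 + m by ring, zpow_add, zpow_one, Equiv.Perm.mul_apply]
      rw [e, sig_t D ε hε, ih]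
  | pred m ih =>
      intro x
      have e : (tp D ^ (-(m : ℤ) - 1)) x = (tp D)⁻¹ ((tp D ^ (-(m : ℤ))) x) := by
        rw [show (-(m : ℤ) - 1) = (-1) + (-(m : ℤ)) by ring, zpow_add, Equiv.Perm.mul_apply,
          zpow_neg_one]
      rw [e, sig_tinv D ε hε, ih]

end Sign

/-! ### The reachability relation -/

def Rel (x y : GS D) : Prop :=
  ∃ n : ℤ, y = (tp D ^ n) x ∨ y = (tp D ^ n) (iperm D x)

lemma i_tpow (n : ℤ) (x : GS D) :
    iperm D ((tp D ^ n) x) = (tp D ^ (-n)) (iperm D x) := by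
  have h := (semiconj_i D).zpow_right n
  have := congrArg (fun g => g x) h.eq
  simp only [Equiv.Perm.mul_apply] at this
  rw [this, inv_zpow, ← zpow_neg]

lemma i_i (x : GS D) : iperm D (iperm D x) = x := Subtype.ext (ifun_invol D x.2)

lemma rel_refl (x : GS D) : Rel D x x := ⟨0, Or.inl (by simp)⟩

lemma rel_iperm (x : GS D) : Rel D x (iperm D x) := ⟨0, Or.inr (by simp)⟩

lemma rel_symm {x y : GS D} (h : Rel D x y) : Rel D y x := by
  obtain ⟨n, h | h⟩ := h
  · exact ⟨-n, Or.inl (by rw [h, ← Equiv.Perm.mul_apply, ← zpow_add]; simp)⟩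
  · refine ⟨n, Or.inr ?_⟩
    have hiy : iperm D y = (tp D ^ (-n)) x := by rw [h, i_tpow, i_i]
    rw [hiy, ← Equiv.Perm.mul_apply, ← zpow_add]
    simp

lemma rel_trans {x y z : GS D} (hxy : Rel D x y) (hyz : Rel D y z) : Rel D x z := by
  obtain ⟨n, hn | hn⟩ := hxy <;> obtain ⟨m, hm | hm⟩ := hyz
  · exact ⟨m + n, Or.inl (by rw [hm, hn, ← Equiv.Perm.mul_apply, ← zpow_add])⟩
  · refine ⟨m - n, Or.inr ?_⟩
    rw [hm, hn, i_tpow, ← Equiv.Perm.mul_apply, ← zpow_add, sub_eq_add_neg]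
  · exact ⟨m + n, Or.inr (by rw [hm, hn, ← Equiv.Perm.mul_apply, ← zpow_add])⟩
  · refine ⟨m - n, Or.inl ?_⟩
    rw [hm, hn, i_tpow, i_i, ← Equiv.Perm.mul_apply, ← zpow_add, sub_eq_add_neg]

lemma rel_R {x y : GS D} (h : Rel D x y) : Rel D (Rperm D x) (Rperm D y) := by
  obtain ⟨n, hn | hn⟩ := h
  · refine ⟨n, Or.inl ?_⟩
    have h1 := congrArg (fun g => g x) ((commute_Rt D).zpow_right n).eq
    simp only [Equiv.Perm.mul_apply] at h1
    rw [hn]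
    exact h1
  · refine ⟨n, Or.inr ?_⟩
    have h1 := congrArg (fun g => g (iperm D x)) ((commute_Rt D).zpow_right n).eq
    simp only [Equiv.Perm.mul_apply] at h1
    have h2 : Rperm D (iperm D x) = iperm D (Rperm D x) := by
      have := congrArg (fun g => g x) (commute_Ri D).eq
      simpa using this
    rw [hn, h1, h2]

/-! ### No reversal -/

lemma J_tpow (n : ℤ) (x : GS D) :
    Jp D ((tp D ^ n) x) = (tp D ^ (-n)) (Jp D x) := by
  have h := (semiconj_J D).zpow_right n
  have := congrArg (fun g => g x) h.eq
  simp only [Equiv.Perm.mul_apply] at this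
  rw [this, inv_zpow, ← zpow_neg]

lemma step_contra (w : GS D) (h : Aperm D w = Rperm D w) : False := by
  have h2 := congrArg (fun s : GS D => s.1.1) h
  have h3 := congrArg (fun s : GS D => s.1.2.2.2) h
  obtain ⟨⟨i, a, b, k⟩, hgw⟩ := w
  exact D.P_fixedPointFree (i, k) (Prod.ext h2 h3)

theorem no_rev (ε : D.I → ℤˣ)
    (hε : ∀ (i : D.I) (k : Fin 4),
      ε i * (-1) ^ (k : ℕ) * glueSign (D.glue (i, k)) k
        = -(ε (D.P (i, k)).1 * (-1) ^ (((D.P (i, k)).2 : Fin 4) : ℕ)))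
    (x : GS D) : ¬ Rel D x (Rperm D x) := by
  rintro ⟨n, hn | hn⟩
  · -- sign contradiction
    have h1 : sig D ε (Rperm D x) = sig D ε x := by rw [hn, sig_tpow D ε hε]
    have h2 := sig_R D ε x
    have h3 := sig_ne_zero D ε x
    rw [h1] at h2
    have : sig D ε x = 0 := by linarith
    exact h3 this
  · -- parity contradiction
    have hn' : Jp D (iperm D x) = (tp D ^ n) (iperm D x) := by
      have : Jp D (iperm D x) = Rperm D x := by
        show Rperm D (iperm D (iperm D x)) = Rperm D x
        rw [i_i]
      rw [this, hn]
    set y := iperm D x with hy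
    rcases Int.even_or_odd n with ⟨m, hm⟩ | ⟨m, hm⟩
    · -- even: fixed point of Jp
      have hfix : Jp D ((tp D ^ m) y) = (tp D ^ m) y := by
        rw [J_tpow, hn', ← Equiv.Perm.mul_apply, ← zpow_add]
        congr 2
        omega
      exact Jp_no_fixed D _ hfix
    · -- odd: reduce to a single step
      have e1 : tp D ((tp D ^ m) y) = (tp D ^ (1 + m)) y := by
        rw [zpow_add, zpow_one, Equiv.Perm.mul_apply]
      have e2 : Jp D ((tp D ^ m) y) = (tp D ^ (1 + m)) y := by
        rw [J_tpow, hn', ← Equiv.Perm.mul_apply, ← zpow_add]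
        congr 2
        omega
      have hstep : Aperm D (iperm D ((tp D ^ m) y)) = Rperm D (iperm D ((tp D ^ m) y)) := by
        show tp D ((tp D ^ m) y) = Jp D ((tp D ^ m) y)
        rw [e1, e2]
      exact step_contra D _ hstep

/-! ### Lifts and the class setoid -/

def mk (i : D.I) (a b : Fin 4) (hab : a ≠ b) : GS D :=
  ⟨(i, a, b, pick a b), hab, (pick_ne a b hab).1, (pick_ne a b hab).2⟩

lemma R_R (x : GS D) : Rperm D (Rperm D x) = x := Subtype.ext rfl

lemma lifts_rel (x y : GS D) (h1 : x.1.1 = y.1.1) (h2 : x.1.2.1 = y.1.2.1)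
    (h3 : x.1.2.2.1 = y.1.2.2.1) : Rel D x y := by
  obtain ⟨⟨i, a, b, k⟩, g1, g2, g3⟩ := x
  obtain ⟨⟨i', a', b', k'⟩, g1', g2', g3'⟩ := y
  simp only at h1 h2 h3
  subst h1; subst h2; subst h3
  rcases other_face a b k k' g1 g2 g3 g2' g3' with hk | hk
  · subst hk
    exact rel_refl D _
  · subst hk
    exact rel_iperm D _

def s2 : Setoid (GS D) where
  r x y := Rel D x y ∨ Rel D x (Rperm D y)
  iseqv := by
    constructor
    · intro x; exact Or.inl (rel_refl D x)
    · intro x y h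
      rcases h with h | h
      · exact Or.inl (rel_symm D h)
      · refine Or.inr ?_
        have h1 := rel_R D (rel_symm D h)
        rw [R_R] at h1
        exact h1
    · intro x y z hxy hyz
      rcases hxy with h1 | h1 <;> rcases hyz with h2 | h2
      · exact Or.inl (rel_trans D h1 h2)
      · exact Or.inr (rel_trans D h1 h2)
      · exact Or.inr (rel_trans D h1 (rel_R D h2))
      · refine Or.inl (rel_trans D h1 ?_)
        have h3 := rel_R D h2
        rw [R_R] at h3
        exact h3

lemma rel_A (x : GS D) : Rel D x (Aperm D x) := by
  refine ⟨1, Or.inr ?_⟩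
  rw [zpow_one]
  show Aperm D x = Aperm D (iperm D (iperm D x))
  rw [i_i]

end OriDirAux

/-- Proposition: in dimension 3, condition Ori (the tetrahedra can be oriented so that
all face-pairings reverse the induced orientation) implies condition Dir (the edges can
be coherently directed). -/
theorem ori_implies_dir_dim3 (D : GlueingDatum 3) (h : Ori D) : Dir D := by
  classical
  obtain ⟨ε, hε⟩ := h
  open OriDirAux in
  let rep : GS D → GS D := fun x => (Quotient.mk (OriDirAux.s2 D) x).out
  have rep_rel : ∀ x : OriDirAux.GS D, (OriDirAux.s2 D).r (rep x) x := fun x =>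
    Quotient.exact (Quotient.out_eq _)
  have rep_eq : ∀ x y : OriDirAux.GS D, (OriDirAux.s2 D).r x y → rep x = rep y := by
    intro x y hxy
    show (Quotient.mk (OriDirAux.s2 D) x).out = (Quotient.mk (OriDirAux.s2 D) y).out
    rw [Quotient.sound hxy]
  refine ⟨fun i a b => if hab : a ≠ b then
      OriDirAux.Rel D (OriDirAux.mk D i a b hab) (rep (OriDirAux.mk D i a b hab))
    else False, ?_, ?_⟩
  · -- Xor
    intro i a b hab
    simp only [dif_pos hab, dif_pos (Ne.symm hab)]
    set u := OriDirAux.mk D i a b hab with hu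
    set v := OriDirAux.mk D i b a (Ne.symm hab) with hv
    have key : OriDirAux.Rel D u (OriDirAux.Rperm D v) :=
      OriDirAux.lifts_rel D u (OriDirAux.Rperm D v) rfl rfl rfl
    have key2 : OriDirAux.Rel D v (OriDirAux.Rperm D u) :=
      OriDirAux.lifts_rel D v (OriDirAux.Rperm D u) rfl rfl rfl
    have hrep : rep u = rep v := rep_eq u v (Or.inr key)
    rcases rep_rel u with h1 | h1
    · refine Or.inl ⟨OriDirAux.rel_symm D h1, ?_⟩
      intro h2
      rw [← hrep] at h2
      exact OriDirAux.no_rev D ε hε v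
        (OriDirAux.rel_trans D (OriDirAux.rel_trans D h2 h1) key)
    · refine Or.inr ⟨?_, ?_⟩
      · rw [← hrep]
        exact OriDirAux.rel_trans D key2 (OriDirAux.rel_symm D h1)
      · intro h2
        exact OriDirAux.no_rev D ε hε u (OriDirAux.rel_trans D h2 h1)
  · -- compatibility with gluings
    intro i k a b hak hbk hab
    have hab' : D.glue (i, k) a ≠ D.glue (i, k) b := (D.glue (i, k)).injective.ne hab
    simp only [dif_pos hab, dif_pos hab']
    set u := OriDirAux.mk D i a b hab with hu
    set w := OriDirAux.mk D (D.P (i, k)).1 (D.glue (i, k) a) (D.glue (i, k) b) hab' with hw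
    have u0 : OriDirAux.GS D := ⟨(i, a, b, k), hab, hak, hbk⟩
    have r1 : OriDirAux.Rel D u (⟨(i, a, b, k), hab, hak, hbk⟩ : OriDirAux.GS D) :=
      OriDirAux.lifts_rel D _ _ rfl rfl rfl
    have r2 := OriDirAux.rel_A D (⟨(i, a, b, k), hab, hak, hbk⟩ : OriDirAux.GS D)
    have r3 : OriDirAux.Rel D
        (OriDirAux.Aperm D (⟨(i, a, b, k), hab, hak, hbk⟩ : OriDirAux.GS D)) w :=
      OriDirAux.lifts_rel D _ _ rfl rfl rfl
    have ruw : OriDirAux.Rel D u w :=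
      OriDirAux.rel_trans D r1 (OriDirAux.rel_trans D r2 r3)
    have hrep : rep u = rep w := rep_eq u w (Or.inl ruw)
    constructor
    · intro h1
      rw [← hrep]
      exact OriDirAux.rel_trans D (OriDirAux.rel_symm D ruw) h1
    · intro h1
      rw [hrep]
      exact OriDirAux.rel_trans D ruw h1
end
end

section
/- Let n = 4. A glueing datum of dimension n consists of: a finite nonempty index set I (indexing copies Δ_i of the standard n-simplex, realized as {x : {0,…,n} → [0,∞) | Σ_v x_v = 1}, with vertices labeled 0,…,n); a fixed-point-free involution P of the set I × {0,…,n} of codimension-1 faces, where (i,k) denotes the face {x ∈ Δ_i | x_k = 0}; and, for each face (i,k) with P(i,k) = (j,l), a bijection φ_{(i,k)} : {0,…,n}∖{k} → {0,…,n}∖{l}, subject to φ_{(j,l)} = φ_{(i,k)}⁻¹. A cycle around a triangle is the data of m ≥ 1, indices i_0,…,i_m ∈ I, injections t_0,…,t_m : {0,1,2} → {0,…,4}, and for each 0 ≤ r < m a choice k_r ∈ {0,…,4} with k_r ∉ image(t_r), such that P(i_r,k_r) = (i_{r+1}, l_{r+1}) for some l_{r+1} and t_{r+1} = φ_{(i_r,k_r)}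 ∘ t_r, such that k_r ≠ l_r for all 0 < r < m, and such that i_m = i_0, image(t_m) = image(t_0) and l_m ≠ k_0. Suppose condition Ori holds: there exists ε : I → {+1,−1} such that for every face (i,k) with P(i,k) = (j,l) one has ε(i)·(−1)^k·sgn(φ_{(i,k)}) = −ε(j)·(−1)^l, where sgn(φ_{(i,k)}) is the signature of the permutation of {1,…,n} obtained by conjugating φ_{(i,k)} with the order-preserving bijections {0,…,n}∖{k} → {1,…,n} and {0,…,n}∖{l} → {1,…,n}. Then for every cycle around a triangle, the permutation t_0⁻¹ ∘ t_m of {0,1,2} is even. -/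
open scoped Classical

noncomputable section

lemma restrictPerm_apply {n : ℕ} (e : Equiv.Perm (Fin (n + 1))) (k : Fin (n + 1)) (x : Fin n) :
    (e k).succAbove (restrictPerm e k x) = e (k.succAbove x) := by
  simp only [restrictPerm, Equiv.trans_apply, finSuccAboveEquiv_apply, Equiv.subtypeEquiv_apply]
  exact congrArg Subtype.val ((finSuccAboveEquiv (e k)).apply_symm_apply ⟨e (k.succAbove x), _⟩)

lemma restrictPerm_eq {n : ℕ} (e : Equiv.Perm (Fin (n + 1))) (k : Fin (n + 1)) (x : Fin n)
    (y : Fin n) (hy : (e k).succAbove y = e (k.succAbove x)) : restrictPerm e k x = y :=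
  Fin.succAbove_right_injective (p := e k) (by rw [restrictPerm_apply, hy])

lemma restrictPerm_mul {n : ℕ} (e₂ e₁ : Equiv.Perm (Fin (n + 1))) (k : Fin (n + 1)) :
    restrictPerm (e₂ * e₁) k = restrictPerm e₂ (e₁ k) * restrictPerm e₁ k := by
  ext x
  refine congrArg Fin.val (restrictPerm_eq _ _ _ _ ?_)
  simp only [Equiv.Perm.mul_apply]
  rw [restrictPerm_apply, restrictPerm_apply]

lemma restrictPerm_one {n : ℕ} (k : Fin (n + 1)) :
    restrictPerm (1 : Equiv.Perm (Fin (n + 1))) k = 1 := by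
  ext x
  exact congrArg Fin.val (restrictPerm_eq _ _ _ _ rfl)

lemma restrictPerm_cycleRange {n : ℕ} (k : Fin (n + 1)) :
    restrictPerm (Fin.cycleRange k) k = 1 := by
  ext x
  refine congrArg Fin.val (restrictPerm_eq _ _ _ _ ?_)
  rw [Fin.cycleRange_self, Fin.cycleRange_succAbove, Fin.succAbove_zero]; rfl

lemma restrictPerm_cycleRange_inv {n : ℕ} (k : Fin (n + 1)) :
    restrictPerm (Fin.cycleRange k)⁻¹ 0 = 1 := by
  have h0 : ((Fin.cycleRange k)⁻¹ : Equiv.Perm (Fin (n+1))) 0 = k := Fin.cycleRange_symm_zero k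
  have := restrictPerm_mul (Fin.cycleRange k) (Fin.cycleRange k)⁻¹ 0
  rw [mul_inv_cancel, restrictPerm_one, h0, restrictPerm_cycleRange, one_mul] at this
  exact this.symm

lemma sign_restrictPerm {n : ℕ} (e : Equiv.Perm (Fin (n + 1))) (k : Fin (n + 1)) :
    Equiv.Perm.sign (restrictPerm e k) = Equiv.Perm.sign e * (-1) ^ ((k : ℕ) + ((e k : Fin (n+1)) : ℕ)) := by
  set f : Equiv.Perm (Fin (n + 1)) := Fin.cycleRange (e k) * (e * (Fin.cycleRange k)⁻¹) with hf
  have hck : ((Fin.cycleRange k)⁻¹ : Equiv.Perm (Fin (n+1))) 0 = k := Fin.cycleRange_symm_zero k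
  have hf0 : f 0 = 0 := by
    simp only [hf, Equiv.Perm.mul_apply, hck, Fin.cycleRange_self]
  have hres : restrictPerm f 0 = restrictPerm e k := by
    rw [hf, restrictPerm_mul, restrictPerm_mul, restrictPerm_cycleRange_inv, mul_one,
      Equiv.Perm.mul_apply, hck, restrictPerm_cycleRange, one_mul]
  have hext : f = (restrictPerm f 0).extendDomain (finSuccAboveEquiv (0 : Fin (n+1))) := by
    ext x
    refine Fin.cases ?_ (fun y => ?_) x
    · rw [hf0, Equiv.Perm.extendDomain_apply_not_subtype]
      exact not_not_intro rfl
    · have h1 : ((finSuccAboveEquiv (0 : Fin (n+1))) y : Fin (n+1)) = y.succ := by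
        simp [finSuccAboveEquiv_apply, Fin.succAbove_zero]
      have := Equiv.Perm.extendDomain_apply_image (restrictPerm f 0) (finSuccAboveEquiv (0 : Fin (n+1))) y
      rw [h1] at this
      rw [this]
      have h2 := restrictPerm_apply f 0 y
      rw [hf0, Fin.succAbove_zero] at h2
      rw [(by simp [finSuccAboveEquiv_apply, Fin.succAbove_zero] :
        ((finSuccAboveEquiv (0 : Fin (n+1))) ((restrictPerm f 0) y) : Fin (n+1)) = ((restrictPerm f 0) y).succ)]
      exact congrArg Fin.val h2.symm
  have hsf : Equiv.Perm.sign f = Equiv.Perm.sign (restrictPerm e k) := by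
    rw [hext, Equiv.Perm.sign_extendDomain, hres]
  have hsf2 : Equiv.Perm.sign f = Equiv.Perm.sign e * (-1) ^ ((k : ℕ) + ((e k : Fin (n+1)) : ℕ)) := by
    rw [hf]
    simp only [map_mul, Fin.sign_cycleRange, map_inv, pow_add]
    have hinv : ((-1 : ℤˣ) ^ (k : ℕ))⁻¹ = (-1) ^ (k : ℕ) := by
      rw [← inv_pow]; norm_num
    rw [hinv, mul_comm ((-1 : ℤˣ) ^ ((e k : Fin (n+1)) : ℕ)), mul_assoc]
  rw [← hsf, hsf2]

def prodRev (g : ℕ → Equiv.Perm (Fin 5)) : ℕ → Equiv.Perm (Fin 5)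
  | 0 => 1
  | r + 1 => g r * prodRev g r

lemma five_cases (u : Fin 3 → Fin 5) (hu : Function.Injective u) (a b : Fin 5) (hab : a ≠ b)
    (ha : a ∉ Set.range u) (hb : b ∉ Set.range u) (x : Fin 5) :
    x ∈ Set.range u ∨ x = a ∨ x = b := by
  by_contra hx
  push_neg at hx
  obtain ⟨h1, h2, h3⟩ := hx
  have hs : (Finset.univ.image u).card = 3 := by
    rw [Finset.card_image_of_injective _ hu]; simp
  have hd : Disjoint (Finset.univ.image u) ({a, b, x} : Finset (Fin 5)) := by
    simp only [Finset.disjoint_left, Finset.mem_image, Finset.mem_insert, Finset.mem_singleton]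
    rintro y ⟨c, -, rfl⟩ (h | h | h)
    · exact ha ⟨c, h⟩
    · exact hb ⟨c, h⟩
    · exact h1 ⟨c, h⟩
  have ht : ({a, b, x} : Finset (Fin 5)).card = 3 := by
    rw [Finset.card_insert_of_notMem (by simp [hab, Ne.symm h2]),
      Finset.card_insert_of_notMem (by simp [Ne.symm h3]), Finset.card_singleton]
  have hc := Finset.card_union_of_disjoint hd
  have hle := Finset.card_le_univ (Finset.univ.image u ∪ ({a, b, x} : Finset (Fin 5)))
  simp only [hc, hs, ht, Finset.card_univ, Fintype.card_fin] at hle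
  omega

/-- First assertion of Proposition '4-dim orientation': if condition Ori holds, then for
every cycle around a triangle (a sequence of 4-simplices cyclically arranged around a
2-dimensional face, followed through the face-pairings), the return permutation
`t₀⁻¹ ∘ t_m` of the three vertices of the triangle is even. -/
theorem ori_implies_cycl_even (D : GlueingDatum 4) (h : Ori D)
    (m : ℕ) (hm : 1 ≤ m) (i : ℕ → D.I) (t : ℕ → Fin 3 → Fin 5) (k l : ℕ → Fin 5)
    (ht : ∀ r, r ≤ m → Function.Injective (t r))
    (hk : ∀ r, r < m → k r ∉ Set.range (t r))
    (hP : ∀ r, r < m → D.P (i r, k r) = (i (r + 1), l (r + 1)))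
    (hstep : ∀ r, r < m → t (r + 1) = ⇑(D.glue (i r, k r)) ∘ t r)
    (hkl : ∀ r, 0 < r → r < m → k r ≠ l r)
    (hi : i m = i 0) (hrange : Set.range (t m) = Set.range (t 0))
    (hlk : l m ≠ k 0) :
    ∃ σ : Equiv.Perm (Fin 3), Equiv.Perm.sign σ = 1 ∧ t m = t 0 ∘ ⇑σ := by
  obtain ⟨ε, hε⟩ := h
  set g : ℕ → Equiv.Perm (Fin 5) := fun r => D.glue (i r, k r) with hg
  -- the image of the chosen face vertex
  have hgk : ∀ r, r < m → g r (k r) = l (r + 1) := by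
    intro r hr
    have := D.glue_face (i r, k r)
    rw [hP r hr] at this
    exact this
  -- sign of each glue map
  have hsg : ∀ r, r < m → Equiv.Perm.sign (g r) = -(ε (i r) * ε (i (r + 1))) := by
    intro r hr
    have hε' := hε (i r) (k r)
    rw [hP r hr] at hε'
    rw [show glueSign (D.glue (i r, k r)) (k r) = glueSign (g r) (k r) from rfl] at hε'
    rw [glueSign, sign_restrictPerm, hgk r hr, pow_add] at hε'
    simp only [Prod.fst, Prod.snd] at hε'
    obtain hA | hA := Int.units_eq_one_or (ε (i r)) <;>
      obtain hB | hB := Int.units_eq_one_or (ε (i (r + 1))) <;>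
      obtain hX | hX := Int.units_eq_one_or ((-1 : ℤˣ) ^ ((k r : ℕ))) <;>
      obtain hY | hY := Int.units_eq_one_or ((-1 : ℤˣ) ^ ((l (r + 1) : ℕ))) <;>
      obtain hS | hS := Int.units_eq_one_or (Equiv.Perm.sign (g r)) <;>
      rw [hA, hB, hX, hY, hS] at hε' <;> rw [hA, hB, hS] <;> revert hε' <;> decide
  -- t r in terms of the product permutation
  have hA : ∀ r, r ≤ m → t r = ⇑(prodRev g r) ∘ t 0 := by
    intro r
    induction r with
    | zero => intro _; funext a; simp [prodRev]
    | succ r ih =>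
      intro hr
      have hrm : r < m := hr
      rw [hstep r hrm, ih (le_of_lt hrm)]
      funext a
      simp [prodRev]; rfl
  -- sign of the product
  have hsG : ∀ r, r ≤ m →
      Equiv.Perm.sign (prodRev g r) = (-1) ^ r * (ε (i 0) * ε (i r)) := by
    intro r
    induction r with
    | zero =>
      intro _
      obtain hA0 | hA0 := Int.units_eq_one_or (ε (i 0)) <;>
        rw [show prodRev g 0 = 1 from rfl, hA0] <;> decide
    | succ r ih =>
      intro hr
      have hrm : r < m := hr
      rw [show prodRev g (r+1) = g r * prodRev g r from rfl, map_mul, hsg r hrm,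
        ih (le_of_lt hrm), pow_succ]
      obtain hA0 | hA0 := Int.units_eq_one_or (ε (i 0)) <;>
        obtain hA1 | hA1 := Int.units_eq_one_or (ε (i r)) <;>
        obtain hA2 | hA2 := Int.units_eq_one_or (ε (i (r + 1))) <;>
        obtain hX | hX := Int.units_eq_one_or ((-1 : ℤˣ) ^ r) <;>
        rw [hA0, hA1, hA2, hX] <;> decide
  have hsGm : Equiv.Perm.sign (prodRev g m) = (-1) ^ m := by
    rw [hsG m le_rfl, hi]
    obtain hA0 | hA0 := Int.units_eq_one_or (ε (i 0)) <;> rw [hA0] <;> simp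
  -- complement tracking
  set K : ℕ → Fin 5 := fun r => if r = m then k 0 else k r with hKdef
  set L : ℕ → Fin 5 := fun r => if r = 0 then l m else l r with hLdef
  have hLnotin : ∀ r, r < m → l (r + 1) ∉ Set.range (t (r + 1)) := by
    rintro r hr ⟨a, ha⟩
    rw [hstep r hr] at ha
    exact hk r hr ⟨a, (D.glue (i r, k r)).injective (ha.trans (hgk r hr).symm)⟩
  have hlm : l m ∉ Set.range (t m) := by
    obtain ⟨m', hm'⟩ : ∃ m', m' + 1 = m := ⟨m - 1, by omega⟩
    have := hLnotin m' (by omega)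
    rw [hm'] at this
    exact this
  have hc1 : ∀ r, r ≤ m → K r ∉ Set.range (t r) := by
    intro r hr
    by_cases hrm : r = m
    · simp only [hKdef, if_pos hrm]
      rw [hrm, hrange]
      exact hk 0 (by omega)
    · simp only [hKdef, if_neg hrm]
      exact hk r (by omega)
  have hc2 : ∀ r, r ≤ m → L r ∉ Set.range (t r) := by
    intro r hr
    by_cases hr0 : r = 0
    · simp only [hLdef, if_pos hr0]
      rw [hr0, ← hrange]
      exact hlm
    · obtain ⟨r', rfl⟩ : ∃ r', r' + 1 = r := ⟨r - 1, by omega⟩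
      simp only [hLdef, if_neg hr0]
      exact hLnotin r' (by omega)
  have hc3 : ∀ r, r ≤ m → K r ≠ L r := by
    intro r hr
    simp only [hKdef, hLdef]
    by_cases hrm : r = m
    · have hr0 : ¬ (r = 0) := by omega
      rw [if_pos hrm, if_neg hr0, hrm]
      exact fun hh => hlk hh.symm
    · by_cases hr0 : r = 0
      · rw [if_neg hrm, if_pos hr0, hr0]
        exact fun hh => hlk hh.symm
      · rw [if_neg hrm, if_neg hr0]
        exact hkl r (by omega) (by omega)
  have hc4 : ∀ r, r < m → g r (K r) = L (r + 1) ∧ g r (L r) = K (r + 1) := by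
    intro r hr
    have hKr : K r = k r := by rw [hKdef]; simp only [if_neg (by omega : r ≠ m)]
    have hL1 : L (r + 1) = l (r + 1) := by rw [hLdef]; simp only [if_neg (by omega : r + 1 ≠ 0)]
    have h1 : g r (K r) = L (r + 1) := by rw [hKr, hL1]; exact hgk r hr
    refine ⟨h1, ?_⟩
    have hX1 : g r (L r) ∉ Set.range (t (r + 1)) := by
      rintro ⟨a, ha⟩
      rw [hstep r hr] at ha
      exact hc2 r (le_of_lt hr) ⟨a, (D.glue (i r, k r)).injective ha⟩
    have hX2 : g r (L r) ≠ L (r + 1) := by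
      rw [← h1]
      intro hh
      exact hc3 r (le_of_lt hr) ((g r).injective hh).symm
    rcases five_cases (t (r + 1)) (ht (r + 1) (by omega)) (K (r + 1)) (L (r + 1))
      (hc3 (r + 1) (by omega)) (hc1 (r + 1) (by omega)) (hc2 (r + 1) (by omega))
      (g r (L r)) with hmem | hKK | hLL
    · exact absurd hmem hX1
    · exact hKK
    · exact absurd hLL hX2
  -- parity tracking of the two extra vertices
  have hD : ∀ r, r ≤ m →
      (prodRev g r (k 0) = if Even r then K r else L r) ∧
      (prodRev g r (l m) = if Even r then L r else K r) := by
    intro r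
    induction r with
    | zero =>
      intro _
      constructor
      · simp only [if_pos (Even.zero)]
        rw [hKdef]
        simp only [if_neg (by omega : 0 ≠ m)]
        rfl
      · simp only [if_pos (Even.zero)]
        rw [hLdef]
        simp only [if_pos rfl]
        rfl
    | succ r ih =>
      intro hr
      have hrm : r < m := hr
      obtain ⟨ih1, ih2⟩ := ih (le_of_lt hrm)
      have hstep1 : prodRev g (r + 1) (k 0) = g r (prodRev g r (k 0)) := rfl
      have hstep2 : prodRev g (r + 1) (l m) = g r (prodRev g r (l m)) := rfl
      by_cases he : Even r
      · rw [if_pos he] at ih1 ih2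
        rw [if_neg (by simp [Nat.even_add_one, he]), if_neg (by simp [Nat.even_add_one, he]),
          hstep1, hstep2, ih1, ih2]
        exact ⟨(hc4 r hrm).1, (hc4 r hrm).2⟩
      · rw [if_neg he] at ih1 ih2
        rw [if_pos (by simp [Nat.even_add_one, he]), if_pos (by simp [Nat.even_add_one, he]),
          hstep1, hstep2, ih1, ih2]
        exact ⟨(hc4 r hrm).2, (hc4 r hrm).1⟩
  have hKm : K m = k 0 := by rw [hKdef]; simp
  have hLm : L m = l m := by rw [hLdef]; simp only [if_neg (by omega : m ≠ 0)]
  -- the return permutation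
  have hinj0 : Function.Injective (t 0) := ht 0 (by omega)
  set f : Fin 3 ≃ Set.range (t 0) := Equiv.ofInjective (t 0) hinj0 with hfdef
  have hmem : ∀ a, t m a ∈ Set.range (t 0) := fun a => hrange ▸ Set.mem_range_self a
  set σ0 : Fin 3 → Fin 3 := fun a => f.symm ⟨t m a, hmem a⟩ with hσ0
  have hσ0spec : ∀ a, t 0 (σ0 a) = t m a := by
    intro a
    have := f.apply_symm_apply ⟨t m a, hmem a⟩
    have h2 : (f (σ0 a) : Fin 5) = t 0 (σ0 a) := rfl
    rw [hσ0]
    simp only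
    rw [← h2, this]
  have hσ0inj : Function.Injective σ0 := by
    intro a b hab
    have := congrArg (t 0) hab
    rw [hσ0spec, hσ0spec] at this
    exact ht m le_rfl this
  set σ : Equiv.Perm (Fin 3) :=
    Equiv.ofBijective σ0 (Finite.injective_iff_bijective.mp hσ0inj) with hσdef
  have hσapp : ∀ a, σ a = σ0 a := fun a => rfl
  have htm : t m = t 0 ∘ ⇑σ := by
    funext a
    exact (hσ0spec a).symm
  refine ⟨σ, ?_, htm⟩
  -- decompose the product permutation
  have hext : prodRev g m =
      (if Even m then 1 else Equiv.swap (k 0) (l m)) * σ.extendDomain f := by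
    apply Equiv.ext
    intro x
    have hk0 : k 0 ∉ Set.range (t 0) := hk 0 (by omega)
    have hlm0 : l m ∉ Set.range (t 0) := hrange ▸ hlm
    rcases five_cases (t 0) hinj0 (k 0) (l m) (Ne.symm hlk) hk0 hlm0 x with hmx | rfl | rfl
    · obtain ⟨a, rfl⟩ := hmx
      have h1 : prodRev g m (t 0 a) = t m a := by
        have := congrFun (hA m le_rfl) a
        exact this.symm
      have h2 : σ.extendDomain f (t 0 a) = t m a := by
        have h3 : (f a : Fin 5) = t 0 a := rfl
        rw [← h3, Equiv.Perm.extendDomain_apply_image]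
        have h4 : (f (σ a) : Fin 5) = t 0 (σ a) := rfl
        rw [h4, hσapp, hσ0spec]
      rw [h1]
      simp only [Equiv.Perm.mul_apply, h2]
      by_cases he : Even m
      · rw [if_pos he]; rfl
      · rw [if_neg he]
        refine (Equiv.swap_apply_of_ne_of_ne ?_ ?_).symm
        · intro hh
          exact hk0 (by rw [← hh]; exact hmem a)
        · intro hh
          exact hlm0 (by rw [← hh]; exact hmem a)
    · have h1 := (hD m le_rfl).1
      have h2 : σ.extendDomain f (k 0) = k 0 :=
        Equiv.Perm.extendDomain_apply_not_subtype σ f hk0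
      simp only [Equiv.Perm.mul_apply, h2]
      by_cases he : Even m
      · rw [if_pos he] at h1
        rw [h1, hKm]
        rw [if_pos he]
        rfl
      · rw [if_neg he] at h1
        rw [h1, hLm, if_neg he]
        exact (Equiv.swap_apply_left _ _).symm
    · have h1 := (hD m le_rfl).2
      have h2 : σ.extendDomain f (l m) = l m :=
        Equiv.Perm.extendDomain_apply_not_subtype σ f hlm0
      simp only [Equiv.Perm.mul_apply, h2]
      by_cases he : Even m
      · rw [if_pos he] at h1
        rw [h1, hLm, if_pos he]
        rfl
      · rw [if_neg he] at h1
        rw [h1, hKm, if_neg he]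
        exact (Equiv.swap_apply_right _ _).symm
  -- conclude about the sign
  have hsσ := hsGm
  rw [hext, map_mul, Equiv.Perm.sign_extendDomain] at hsσ
  by_cases he : Even m
  · rw [if_pos he, map_one, one_mul] at hsσ
    rw [hsσ]
    exact Even.neg_one_pow he
  · rw [if_neg he, Equiv.Perm.sign_swap (Ne.symm hlk),
      Odd.neg_one_pow (Nat.not_even_iff_odd.mp he)] at hsσ
    obtain hS | hS := Int.units_eq_one_or (Equiv.Perm.sign σ)
    · exact hS
    · rw [hS] at hsσ
      exact absurd hsσ (by decide)
end
end
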